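/- Let r ≥ 1. Let ♮ : Λ̂(r)[q] → ℂ[q][[x]] be the unique continuous ℂ[q]-algebra homomorphism sending p_1(1) to x and p_i(ζ) to 0 for all (i,ζ) ≠ (1,1). Then for all f ∈ Λ̂(r)[q] and all g ∈ Λ̂(1)[q] lying in the augmentation ideal (every term of g has positive degree in the p_j), one has (f ∘ g)^♮ = f^♮(g^♮), where the right-hand side is the power series obtained by substituting g^♮ ∈ ℂ[q][[x]] for x in f^♮. -/

import Mathlib

open scoped Classical

noncomputable section

/-- The group `μ_r` of complex `r`-th roots of unity. -/
abbrev mu (r : ℕ) : Type := rootsOfUnity r ℂ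

/-- Index type for the indeterminates `p_i(ζ)` of `Λ̂(r)`. -/
abbrev PVar (r : ℕ) : Type := ℕ+ × mu r

/-- `Λ̂(r)[q]`: formal power series in the `p_i(ζ)` (indexed by `Sum.inl`) and the extra
variable `q` (indexed by `Sum.inr ()`). -/
abbrev LambdaQ (r : ℕ) : Type := MvPowerSeries (PVar r ⊕ Unit) ℂ

/-- `Λ̂(1)[q]`: formal power series in the `p_j = p_j(1)` (indexed by `Sum.inl`) and `q`. -/
abbrev Lambda1Q : Type := MvPowerSeries (ℕ+ ⊕ Unit) ℂ

/-- `ℂ[q][[x]]`: power series in `x` (indexed by `Sum.inl ()`) and `q` (`Sum.inr ()`). -/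
abbrev QX : Type := MvPowerSeries (Unit ⊕ Unit) ℂ

/-- Substitution of the family `φ` into a multivariate formal power series `f`:
the unique continuous `ℂ`-algebra homomorphism sending `X s` to `φ s`. -/
def ssubst {σ τ : Type*} (φ : σ → MvPowerSeries τ ℂ) (f : MvPowerSeries σ ℂ) :
    MvPowerSeries τ ℂ :=
  fun m => ∑ᶠ d : σ →₀ ℕ,
    MvPowerSeries.coeff d f * MvPowerSeries.coeff m (d.prod fun s k => φ s ^ k)

/-- The series `p_i(ζ) ∘ g`, obtained from `g ∈ Λ̂(1)[q]` by replacing each `p_j` by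
`p_{ij}(ζ^j)` and `q` by `q^i`. -/
def gsub {r : ℕ} (i : ℕ+) (ζ : mu r) (g : Lambda1Q) : LambdaQ r :=
  ssubst (fun v => match v with
    | Sum.inl j => (MvPowerSeries.X (Sum.inl (i * j, ζ ^ (j : ℕ))) : LambdaQ r)
    | Sum.inr _ => (MvPowerSeries.X (Sum.inr ()) : LambdaQ r) ^ (i : ℕ)) g

/-- The plethysm `f ∘ g : Λ̂(r)[q] × Λ̂(1)[q]_+ → Λ̂(r)[q]`: the unique continuous
`ℂ[q]`-algebra homomorphism in `f` sending `p_i(ζ)` to `p_i(ζ) ∘ g`. -/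
def plethRQ {r : ℕ} (f : LambdaQ r) (g : Lambda1Q) : LambdaQ r :=
  ssubst (fun v => match v with
    | Sum.inl p => gsub p.1 p.2 g
    | Sum.inr _ => (MvPowerSeries.X (Sum.inr ()) : LambdaQ r)) f

/-- The specialization `♮ : Λ̂(r)[q] → ℂ[q][[x]]`: the unique continuous `ℂ[q]`-algebra
homomorphism sending `p_1(1)` to `x` and all other `p_i(ζ)` to `0`. -/
def natR {r : ℕ} (f : LambdaQ r) : QX :=
  ssubst (fun v => match v with
    | Sum.inl p => if p.1 = 1 ∧ p.2 = 1 then (MvPowerSeries.X (Sum.inl ()) : QX) else 0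
    | Sum.inr _ => (MvPowerSeries.X (Sum.inr ()) : QX)) f

/-- The specialization `♮ : Λ̂(1)[q] → ℂ[q][[x]]` sending `p_1` to `x` and `p_j` (`j ≥ 2`)
to `0`. -/
def nat1 (g : Lambda1Q) : QX :=
  ssubst (fun v => match v with
    | Sum.inl j => if j = 1 then (MvPowerSeries.X (Sum.inl ()) : QX) else 0
    | Sum.inr _ => (MvPowerSeries.X (Sum.inr ()) : QX)) g

namespace PlethAux19

open MvPowerSeries

variable {σ τ ι : Type*}

lemma coeff_ssubst (φ : σ → MvPowerSeries τ ℂ) (f : MvPowerSeries σ ℂ) (m : τ →₀ ℕ) :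
    MvPowerSeries.coeff m (ssubst φ f)
      = ∑ᶠ d : σ →₀ ℕ, MvPowerSeries.coeff d f *
          MvPowerSeries.coeff m (d.prod fun s k => φ s ^ k) := rfl

lemma ssubst_congr {φ ψ : σ → MvPowerSeries τ ℂ} (h : φ = ψ) (f : MvPowerSeries σ ℂ) :
    ssubst φ f = ssubst ψ f := by rw [h]

lemma prod_X_pow (d : σ →₀ ℕ) :
    (d.prod fun s k => (MvPowerSeries.X s : MvPowerSeries σ ℂ) ^ k)
      = MvPowerSeries.monomial d 1 := by
  induction d using Finsupp.induction with
  | zero => simp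
  | single_add a n f ha hn ih =>
    rw [Finsupp.prod_add_index' (fun _ => pow_zero _) (fun _ _ _ => pow_add _ _ _),
        Finsupp.prod_single_index
          (h := fun s k => (MvPowerSeries.X s : MvPowerSeries σ ℂ) ^ k) (pow_zero _),
        ih, MvPowerSeries.X_pow_eq, MvPowerSeries.monomial_mul_monomial, one_mul]

lemma supp_subset_range {u : τ → σ} {p q : σ →₀ ℕ} {m : τ →₀ ℕ}
    (h : p + q = Finsupp.mapDomain u m) : ↑p.support ⊆ Set.range u := by
  intro s hs
  by_contra hsr
  have h1 : p s + q s = 0 := by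
    have h2 := congrArg (fun z : σ →₀ ℕ => z s) h
    simpa [Finsupp.mapDomain_notin_range _ _ hsr] using h2
  exact (Finsupp.mem_support_iff.1 (Finset.mem_coe.1 hs)) (by omega)

/-- Coefficient extraction along an injection of variables, as a bare function. -/
def extFun (u : τ → σ) (h : MvPowerSeries σ ℂ) : MvPowerSeries τ ℂ :=
  fun m => MvPowerSeries.coeff (Finsupp.mapDomain u m) h

lemma coeff_extFun (u : τ → σ) (h : MvPowerSeries σ ℂ) (m : τ →₀ ℕ) :
    MvPowerSeries.coeff m (extFun u h)
      = MvPowerSeries.coeff (Finsupp.mapDomain u m) h := rfl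

lemma extFun_mul (u : τ → σ) (hu : Function.Injective u) (a b : MvPowerSeries σ ℂ) :
    extFun u (a * b) = extFun u a * extFun u b := by
  ext m
  rw [coeff_extFun, MvPowerSeries.coeff_mul, MvPowerSeries.coeff_mul]
  simp only [coeff_extFun]
  refine (Finset.sum_nbij'
    (i := fun p => (Finsupp.comapDomain u p.1 hu.injOn, Finsupp.comapDomain u p.2 hu.injOn))
    (j := fun p => (Finsupp.mapDomain u p.1, Finsupp.mapDomain u p.2)) ?_ ?_ ?_ ?_ ?_)
  · intro p hp
    simp only [Finset.HasAntidiagonal.mem_antidiagonal] at hp ⊢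
    apply Finsupp.mapDomain_injective hu
    rw [Finsupp.mapDomain_add,
      Finsupp.mapDomain_comapDomain u hu _ (supp_subset_range hp),
      Finsupp.mapDomain_comapDomain u hu _ (supp_subset_range (by rw [add_comm]; exact hp)),
      hp]
  · intro p hp
    simp only [Finset.HasAntidiagonal.mem_antidiagonal] at hp ⊢
    rw [← Finsupp.mapDomain_add, hp]
  · intro p hp
    simp only [Finset.HasAntidiagonal.mem_antidiagonal] at hp
    have e1 : Finsupp.mapDomain u (Finsupp.comapDomain u p.1 hu.injOn) = p.1 :=
      Finsupp.mapDomain_comapDomain u hu _ (supp_subset_range hp)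
    have e2 : Finsupp.mapDomain u (Finsupp.comapDomain u p.2 hu.injOn) = p.2 :=
      Finsupp.mapDomain_comapDomain u hu _ (supp_subset_range (by rw [add_comm]; exact hp))
    exact Prod.ext e1 e2
  · intro p _
    have key : ∀ z : τ →₀ ℕ,
        Finsupp.comapDomain u (Finsupp.mapDomain u z) hu.injOn = z := by
      intro z
      apply Finsupp.mapDomain_injective hu
      refine Finsupp.mapDomain_comapDomain u hu _ ?_
      intro s hs
      rcases Finset.mem_image.1 (Finsupp.mapDomain_support (Finset.mem_coe.1 hs)) with ⟨t, _, ht⟩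
      exact ⟨t, ht⟩
    exact Prod.ext (key p.1) (key p.2)
  · intro p hp
    simp only [Finset.HasAntidiagonal.mem_antidiagonal] at hp
    rw [Finsupp.mapDomain_comapDomain u hu _ (supp_subset_range hp),
      Finsupp.mapDomain_comapDomain u hu _ (supp_subset_range (by rw [add_comm]; exact hp))]

/-- The coefficient-extraction ring homomorphism along an injection of variables. -/
def extHom (u : τ → σ) (hu : Function.Injective u) :
    MvPowerSeries σ ℂ →+* MvPowerSeries τ ℂ where
  toFun := extFun u
  map_one' := by
    ext m
    rw [coeff_extFun, MvPowerSeries.coeff_one, MvPowerSeries.coeff_one]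
    have h0 : Finsupp.mapDomain u m = 0 ↔ m = 0 := by
      rw [← Finsupp.mapDomain_zero (f := u)]
      exact (Finsupp.mapDomain_injective hu).eq_iff
    simp [h0]
  map_mul' := extFun_mul u hu
  map_zero' := by ext m; rw [coeff_extFun]; simp
  map_add' a b := by
    ext m
    rw [coeff_extFun, map_add, map_add, coeff_extFun, coeff_extFun]

lemma coeff_extHom (u : τ → σ) (hu : Function.Injective u) (f : MvPowerSeries σ ℂ) (m : τ →₀ ℕ) :
    MvPowerSeries.coeff m (extHom u hu f)
      = MvPowerSeries.coeff (Finsupp.mapDomain u m) f := rfl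

lemma extHom_X (u : τ → σ) (hu : Function.Injective u) (t : τ) :
    extHom u hu (MvPowerSeries.X (u t)) = MvPowerSeries.X t := by
  ext m
  rw [coeff_extHom, MvPowerSeries.coeff_X, MvPowerSeries.coeff_X]
  have h0 : Finsupp.mapDomain u m = Finsupp.single (u t) 1 ↔ m = Finsupp.single t 1 := by
    rw [← Finsupp.mapDomain_single (f := u)]
    exact (Finsupp.mapDomain_injective hu).eq_iff
  simp [h0]

lemma extHom_X_not (u : τ → σ) (hu : Function.Injective u) (s : σ) (hs : s ∉ Set.range u) :
    extHom u hu (MvPowerSeries.X s) = 0 := by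
  ext m
  rw [coeff_extHom, MvPowerSeries.coeff_X, map_zero, if_neg]
  intro h
  have h1 := congrArg (fun z : σ →₀ ℕ => z s) h
  simp only [Finsupp.mapDomain_notin_range _ _ hs, Finsupp.single_eq_same] at h1
  exact one_ne_zero h1.symm

lemma coeff_prod_pow (u : τ → σ) (hu : Function.Injective u)
    (φ : σ → MvPowerSeries τ ℂ) (hX : ∀ t, φ (u t) = MvPowerSeries.X t)
    (h0 : ∀ s, s ∉ Set.range u → φ s = 0) (d : σ →₀ ℕ) (m : τ →₀ ℕ) :
    MvPowerSeries.coeff m (d.prod fun s k => φ s ^ k)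
      = if d = Finsupp.mapDomain u m then 1 else 0 := by
  by_cases hsupp : ↑d.support ⊆ Set.range u
  · have hd : Finsupp.mapDomain u (Finsupp.comapDomain u d hu.injOn) = d :=
      Finsupp.mapDomain_comapDomain u hu d hsupp
    have hprod : d.prod (fun s k => φ s ^ k)
        = MvPowerSeries.monomial (Finsupp.comapDomain u d hu.injOn) 1 := by
      conv_lhs => rw [← hd]
      rw [Finsupp.prod_mapDomain_index_inj hu]
      rw [Finsupp.prod_congr (fun t _ => by rw [hX t])]
      exact prod_X_pow _
    rw [hprod, MvPowerSeries.coeff_monomial]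
    by_cases h : d = Finsupp.mapDomain u m
    · rw [if_pos h, if_pos]
      apply Finsupp.mapDomain_injective hu
      rw [hd, h]
    · rw [if_neg h, if_neg]
      intro hm
      exact h (by rw [← hd, hm])
  · obtain ⟨s, hs, hsr⟩ := Set.not_subset.1 hsupp
    have hs' : s ∈ d.support := Finset.mem_coe.1 hs
    have h1 : d.prod (fun s k => φ s ^ k) = 0 := by
      refine Finset.prod_eq_zero hs' ?_
      show φ s ^ d s = 0
      rw [h0 s hsr]
      exact zero_pow (Finsupp.mem_support_iff.1 hs')
    rw [h1, map_zero, if_neg]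
    intro h
    apply Finsupp.mem_support_iff.1 hs'
    rw [h]
    exact Finsupp.mapDomain_notin_range _ _ hsr

lemma ssubst_eq_extHom (u : τ → σ) (hu : Function.Injective u)
    (φ : σ → MvPowerSeries τ ℂ) (hX : ∀ t, φ (u t) = MvPowerSeries.X t)
    (h0 : ∀ s, s ∉ Set.range u → φ s = 0) (f : MvPowerSeries σ ℂ) :
    ssubst φ f = extHom u hu f := by
  ext m
  rw [coeff_ssubst, coeff_extHom]
  rw [finsum_eq_single _ (Finsupp.mapDomain u m) (fun d hd => by
    rw [coeff_prod_pow u hu φ hX h0, if_neg hd, mul_zero])]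
  rw [coeff_prod_pow u hu φ hX h0, if_pos rfl, mul_one]

lemma extHom_ssubst (u : τ → σ) (hu : Function.Injective u)
    (φ : ι → MvPowerSeries σ ℂ) (f : MvPowerSeries ι ℂ) :
    extHom u hu (ssubst φ f) = ssubst (fun s => extHom u hu (φ s)) f := by
  ext m
  rw [coeff_extHom, coeff_ssubst, coeff_ssubst]
  refine finsum_congr fun d => ?_
  congr 1
  rw [← coeff_extHom u hu]
  congr 1
  rw [map_finsuppProd]
  exact Finsupp.prod_congr fun s _ => map_pow _ _ _

lemma finsum_comp_inj {α β M : Type*} [AddCommMonoid M] {e : α → β} (he : Function.Injective e)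
    (F : β → M) (h0 : ∀ b, b ∉ Set.range e → F b = 0) :
    ∑ᶠ b, F b = ∑ᶠ a, F (e a) := by
  rw [← finsum_mem_univ F, ← finsum_mem_range (f := F) he]
  refine finsum_mem_inter_support_eq' F _ _ fun x hx => ?_
  simp only [Set.mem_univ, true_iff, Set.mem_range]
  by_contra h
  exact hx (h0 x (by simpa [Set.mem_range] using h))

lemma ssubst_extHom (u : τ → σ) (hu : Function.Injective u)
    (ψ : τ → MvPowerSeries ι ℂ) (χ : σ → MvPowerSeries ι ℂ)
    (hψ : ∀ t, χ (u t) = ψ t) (h0 : ∀ s, s ∉ Set.range u → χ s = 0)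
    (f : MvPowerSeries σ ℂ) :
    ssubst ψ (extHom u hu f) = ssubst χ f := by
  ext m
  rw [coeff_ssubst, coeff_ssubst]
  rw [finsum_comp_inj (Finsupp.mapDomain_injective (M := ℕ) hu)
    (fun d => MvPowerSeries.coeff d f *
      MvPowerSeries.coeff m (d.prod fun s k => χ s ^ k))
    (fun d hd => by
      have hsupp : ¬ ↑d.support ⊆ Set.range u := fun hsub =>
        hd ⟨Finsupp.comapDomain u d hu.injOn, Finsupp.mapDomain_comapDomain u hu d hsub⟩
      obtain ⟨s, hs, hsr⟩ := Set.not_subset.1 hsupp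
      have hs' : s ∈ d.support := Finset.mem_coe.1 hs
      have h1 : d.prod (fun s k => χ s ^ k) = 0 := by
        refine Finset.prod_eq_zero hs' ?_
        show χ s ^ d s = 0
        rw [h0 s hsr]
        exact zero_pow (Finsupp.mem_support_iff.1 hs')
      show MvPowerSeries.coeff d f *
        MvPowerSeries.coeff m (d.prod fun s k => χ s ^ k) = 0
      rw [h1, map_zero, mul_zero])]
  refine finsum_congr fun c => ?_
  rw [coeff_extHom]
  congr 1
  rw [Finsupp.prod_mapDomain_index_inj hu]
  exact congrArg _ (Finsupp.prod_congr fun t _ => by rw [hψ t])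

end PlethAux19

namespace PlethAux19

variable (r : ℕ) [NeZero r]

def uR : Unit ⊕ Unit → PVar r ⊕ Unit :=
  Sum.elim (fun _ => Sum.inl ((1 : ℕ+), (1 : mu r))) (fun _ => Sum.inr ())

def u1 : Unit ⊕ Unit → ℕ+ ⊕ Unit :=
  Sum.elim (fun _ => Sum.inl (1 : ℕ+)) (fun _ => Sum.inr ())

lemma uR_inj : Function.Injective (uR r) := by
  rintro (⟨⟩ | ⟨⟩) (⟨⟩ | ⟨⟩) h <;> simp_all [uR]

lemma u1_inj : Function.Injective u1 := by
  rintro (⟨⟩ | ⟨⟩) (⟨⟩ | ⟨⟩) h <;> simp_all [u1]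

lemma natR_eq (f : LambdaQ r) : natR f = extHom (uR r) (uR_inj r) f := by
  unfold natR
  apply ssubst_eq_extHom
  · rintro (⟨⟩ | ⟨⟩) <;> simp [uR]
  · rintro (p | ⟨⟩) hs
    · have hp : ¬(p.1 = 1 ∧ p.2 = 1) := by
        rintro ⟨h1, h2⟩
        exact hs ⟨Sum.inl (), by simp [uR, Prod.ext_iff, h1, h2]⟩
      simp [hp]
    · exact absurd ⟨Sum.inr (), rfl⟩ hs

lemma nat1_eq (g : Lambda1Q) : nat1 g = extHom u1 u1_inj g := by
  unfold nat1
  apply ssubst_eq_extHom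
  · rintro (⟨⟩ | ⟨⟩) <;> simp [u1]
  · rintro (j | ⟨⟩) hs
    · have hj : j ≠ 1 := fun h => hs ⟨Sum.inl (), by simp [u1, h]⟩
      simp [hj]
    · exact absurd ⟨Sum.inr (), rfl⟩ hs

lemma TR_gsub_one (g : Lambda1Q) :
    extHom (uR r) (uR_inj r) (gsub 1 (1 : mu r) g) = nat1 g := by
  rw [gsub, extHom_ssubst, nat1]
  refine ssubst_congr ?_ g
  funext v
  match v with
  | Sum.inl j =>
    show extHom (uR r) (uR_inj r)
        (MvPowerSeries.X (Sum.inl (1 * j, (1 : mu r) ^ (j : ℕ))) : LambdaQ r)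
      = if j = 1 then (MvPowerSeries.X (Sum.inl ()) : QX) else 0
    rw [one_mul, one_pow]
    by_cases hj : j = 1
    · subst hj
      rw [if_pos rfl]
      exact extHom_X (uR r) (uR_inj r) (Sum.inl ())
    · rw [if_neg hj]
      apply extHom_X_not
      rintro ⟨(⟨⟩ | ⟨⟩), ht⟩
      · simp only [uR, Sum.elim_inl, Sum.inl.injEq, Prod.mk.injEq] at ht
        exact hj ht.1.symm
      · simp [uR] at ht
  | Sum.inr _ =>
    show extHom (uR r) (uR_inj r)
        ((MvPowerSeries.X (Sum.inr ()) : LambdaQ r) ^ ((1 : ℕ+) : ℕ)) = _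
    rw [PNat.one_coe, pow_one]
    exact extHom_X (uR r) (uR_inj r) (Sum.inr ())

lemma TR_gsub_ne (g : Lambda1Q)
    (hg : ∀ d : (ℕ+ ⊕ Unit) →₀ ℕ, (∀ j : ℕ+, d (Sum.inl j) = 0) →
      MvPowerSeries.coeff d g = 0)
    (i : ℕ+) (ζ : mu r) (hne : ¬(i = 1 ∧ ζ = 1)) :
    extHom (uR r) (uR_inj r) (gsub i ζ g) = 0 := by
  rw [gsub, extHom_ssubst]
  have hzero : ∀ j : ℕ+,
      extHom (uR r) (uR_inj r)
        (MvPowerSeries.X (Sum.inl (i * j, ζ ^ (j : ℕ))) : LambdaQ r) = 0 := by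
    intro j
    apply extHom_X_not
    rintro ⟨(⟨⟩ | ⟨⟩), ht⟩
    · simp only [uR, Sum.elim_inl, Sum.inl.injEq, Prod.mk.injEq] at ht
      obtain ⟨h1, h2⟩ := ht
      have h1' : (i : ℕ) * (j : ℕ) = 1 := by exact_mod_cast congrArg PNat.val h1.symm
      have hi : i = 1 := by
        have := Nat.eq_one_of_mul_eq_one_right h1'
        exact PNat.coe_injective (by simpa using this)
      have hj : j = 1 := by
        have := Nat.eq_one_of_mul_eq_one_left h1'
        exact PNat.coe_injective (by simpa using this)
      refine hne ⟨hi, ?_⟩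
      have h2' := h2.symm
      rw [hj, PNat.one_coe, pow_one] at h2'
      exact h2'
    · simp [uR] at ht
  have hfam : (fun s => extHom (uR r) (uR_inj r)
      ((fun v => match v with
        | Sum.inl j => (MvPowerSeries.X (Sum.inl (i * j, ζ ^ (j : ℕ))) : LambdaQ r)
        | Sum.inr _ => (MvPowerSeries.X (Sum.inr ()) : LambdaQ r) ^ (i : ℕ)) s))
      = fun s : ℕ+ ⊕ Unit => (match s with
        | Sum.inl _ => (0 : QX)
        | Sum.inr _ => (MvPowerSeries.X (Sum.inr ()) : QX) ^ (i : ℕ)) := by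
    funext s
    match s with
    | Sum.inl j => exact hzero j
    | Sum.inr _ =>
      show extHom (uR r) (uR_inj r) ((MvPowerSeries.X (Sum.inr ()) : LambdaQ r) ^ (i : ℕ))
        = (MvPowerSeries.X (Sum.inr ()) : QX) ^ (i : ℕ)
      rw [map_pow]
      exact congrArg (fun z => z ^ (i : ℕ)) (extHom_X (uR r) (uR_inj r) (Sum.inr ()))
  rw [ssubst_congr hfam g]
  ext m
  rw [coeff_ssubst, map_zero]
  refine finsum_eq_zero_of_forall_eq_zero fun D => ?_
  show MvPowerSeries.coeff D g * MvPowerSeries.coeff m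
      (D.prod fun v k => (match v with
        | Sum.inl _ => (0 : QX)
        | Sum.inr _ => (MvPowerSeries.X (Sum.inr ()) : QX) ^ (i : ℕ)) ^ k) = 0
  by_cases hD : ∀ j : ℕ+, D (Sum.inl j) = 0
  · rw [hg D hD, zero_mul]
  · push_neg at hD
    obtain ⟨j, hj⟩ := hD
    have h1 : (D.prod fun v k => (match v with
        | Sum.inl _ => (0 : QX)
        | Sum.inr _ => (MvPowerSeries.X (Sum.inr ()) : QX) ^ (i : ℕ)) ^ k) = 0 := by
      refine Finset.prod_eq_zero (Finsupp.mem_support_iff.2 hj) ?_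
      show (0 : QX) ^ (D (Sum.inl j)) = 0
      exact zero_pow hj
    rw [h1, map_zero, mul_zero]

end PlethAux19

open PlethAux19

/--
Let `r ≥ 1`.  For all `f ∈ Λ̂(r)[q]` and all `g ∈ Λ̂(1)[q]` in the
augmentation ideal (every monomial of `g` has positive degree in the `p_j`), one has
`(f ∘ g)^♮ = f^♮(g^♮)`, where the right-hand side substitutes `g^♮` for `x` in `f^♮`.
-/
theorem natural_specialization_pleth (r : ℕ) [NeZero r] (hr : 1 ≤ r)
    (f : LambdaQ r) (g : Lambda1Q)
    (hg : ∀ d : (ℕ+ ⊕ Unit) →₀ ℕ, (∀ j : ℕ+, d (Sum.inl j) = 0) →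
      MvPowerSeries.coeff d g = 0) :
    natR (plethRQ f g)
      = ssubst (fun v => match v with
          | Sum.inl _ => nat1 g
          | Sum.inr _ => (MvPowerSeries.X (Sum.inr ()) : QX)) (natR f) := by
  rw [natR_eq r (plethRQ f g), natR_eq r f]
  unfold plethRQ
  rw [extHom_ssubst]
  refine (ssubst_extHom (uR r) (uR_inj r) _ _ ?_ ?_ f).symm
  · rintro (⟨⟩ | ⟨⟩)
    · exact TR_gsub_one r g
    · exact extHom_X (uR r) (uR_inj r) (Sum.inr ())
  · rintro (p | ⟨⟩) hs
    · refine TR_gsub_ne r g hg p.1 p.2 ?_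
      rintro ⟨h1, h2⟩
      exact hs ⟨Sum.inl (), by simp [uR, Prod.ext_iff, h1, h2]⟩
    · exact absurd ⟨Sum.inr (), rfl⟩ hs

end
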